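/- Let g(x) = Σ_{k≥0} aₖ·x^{−k} converge for x > 1/C > 0, and define H[g] as the antiderivative of g(x)/x given by H[g](x) = a₀·ln(x) − Σ_{k≥1} (aₖ/k)·x^{−k}. Then the m-fold iterate satisfies H^m[g](x) = a₀·ln(x)^m/m! + (−1)^m·Σ_{k≥1} (aₖ/k^m)·x^{−k} for all m ≥ 0 and x > 1/C. -/

import Mathlib

open Filter

set_option maxHeartbeats 1000000 in
/-- Let `g(x) = Σ_{k≥0} aₖ·x^{−k}` converge for `x > 1/C > 0`, and let `Hg m = H^m[g]`
be the iterated harmonic antiderivatives (`Hg 0 = g`, `(Hg (m+1))′(x) = Hg m (x)/x`),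
with the integration constants fixed so that `H^{m+1}[g](x) − a₀·ln(x)^{m+1}/(m+1)!`
vanishes at infinity.  Then for all `m ≥ 0` and `x > 1/C` the series
`Σ_{k≥1} (aₖ/k^m)·x^{−k}` converges and
`H^m[g](x) = a₀·ln(x)^m/m! + (−1)^m·Σ_{k≥1} (aₖ/k^m)·x^{−k}`. -/
theorem stmt_6 (C : ℝ) (hC : 0 < C) (a : ℕ → ℝ) (g : ℝ → ℝ)
    (hsum : ∀ x : ℝ, 1 / C < x → Summable (fun k : ℕ => a k * x ^ (-(k : ℤ))))
    (hg : ∀ x : ℝ, 1 / C < x → g x = ∑' k : ℕ, a k * x ^ (-(k : ℤ)))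
    (Hg : ℕ → ℝ → ℝ)
    (hHg0 : ∀ x : ℝ, 1 / C < x → Hg 0 x = g x)
    (hderiv : ∀ m : ℕ, ∀ x : ℝ, 1 / C < x → HasDerivAt (Hg (m + 1)) (Hg m x / x) x)
    (hnorm : ∀ m : ℕ, Tendsto
      (fun x : ℝ => Hg (m + 1) x - a 0 * (Real.log x) ^ (m + 1) / (Nat.factorial (m + 1) : ℝ))
      atTop (nhds 0)) :
    ∀ m : ℕ, ∀ x : ℝ, 1 / C < x →
      Summable (fun k : ℕ => a (k + 1) / ((k : ℝ) + 1) ^ m * x ^ (-((k : ℤ) + 1))) ∧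
      Hg m x = a 0 * (Real.log x) ^ m / (Nat.factorial m : ℝ)
        + (-1 : ℝ) ^ m * ∑' k : ℕ, a (k + 1) / ((k : ℝ) + 1) ^ m * x ^ (-((k : ℤ) + 1)) := by
  have hx0 : ∀ x : ℝ, 1 / C < x → 0 < x := fun x hx => lt_trans (by positivity) hx
  have hone : ∀ k : ℕ, (1:ℝ) ≤ (k:ℝ) + 1 := fun k => by
    have := Nat.cast_nonneg (α := ℝ) k; linarith
  -- absolute summability
  have habs : ∀ x : ℝ, 1 / C < x →
      Summable (fun k : ℕ => |a (k + 1)| * x ^ (-((k : ℤ) + 1))) := by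
    intro x hx
    have h2 : Summable (fun k : ℕ => a (k + 1) * x ^ (-((k + 1 : ℕ) : ℤ))) :=
      (summable_nat_add_iff 1).2 (hsum x hx)
    have h3 := summable_abs_iff.2 h2
    refine h3.congr fun k => ?_
    rw [abs_mul, abs_of_pos (zpow_pos (hx0 x hx) _)]
    norm_num
  have hsumm : ∀ m : ℕ, ∀ x : ℝ, 1 / C < x →
      Summable (fun k : ℕ => a (k + 1) / ((k : ℝ) + 1) ^ m * x ^ (-((k : ℤ) + 1))) := by
    intro m x hx
    refine Summable.of_norm_bounded (habs x hx) fun k => ?_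
    have hxp : (0:ℝ) < x ^ (-((k : ℤ) + 1)) := zpow_pos (hx0 x hx) _
    rw [Real.norm_eq_abs, abs_mul, abs_of_pos hxp, abs_div,
      abs_of_pos (by positivity : (0:ℝ) < ((k:ℝ)+1)^m)]
    exact mul_le_mul_of_nonneg_right
      (div_le_self (abs_nonneg _) (one_le_pow₀ (hone k))) hxp.le
  have habsm : ∀ m : ℕ, ∀ x : ℝ, 1 / C < x →
      Summable (fun k : ℕ => |a (k + 1)| / ((k : ℝ) + 1) ^ m * x ^ (-((k : ℤ) + 1))) := by
    intro m x hx
    refine Summable.of_nonneg_of_le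
      (fun k => mul_nonneg (div_nonneg (abs_nonneg _) (by positivity)) (zpow_pos (hx0 x hx) _).le)
      (fun k => ?_) (habs x hx)
    exact mul_le_mul_of_nonneg_right
      (div_le_self (abs_nonneg _) (one_le_pow₀ (hone k)))
      (zpow_pos (hx0 x hx) _).le
  -- tail series tends to 0
  have htend : ∀ m : ℕ, Tendsto
      (fun y : ℝ => ∑' k : ℕ, a (k + 1) / ((k : ℝ) + 1) ^ m * y ^ (-((k : ℤ) + 1)))
      atTop (nhds 0) := by
    intro m
    set b : ℝ := 1 / C + 1 with hb
    have hbC : 1 / C < b := by simp [hb]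
    have hb0 : 0 < b := hx0 b hbC
    set M : ℝ := ∑' k : ℕ, |a (k + 1)| / ((k : ℝ) + 1) ^ m * b ^ (-(k : ℤ)) with hM
    have hMsum : Summable (fun k : ℕ => |a (k + 1)| / ((k : ℝ) + 1) ^ m * b ^ (-(k : ℤ))) := by
      have h := (habsm m b hbC).mul_right b
      refine h.congr fun k => ?_
      have hb' : b ^ (-((k:ℤ)+1)) * b = b ^ (-(k:ℤ)) := by
        rw [show (-(k:ℤ)) = (-((k:ℤ)+1)) + 1 by ring, zpow_add₀ hb0.ne', zpow_one]
      rw [mul_assoc, hb']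
    have key : ∀ y : ℝ, b ≤ y →
        |∑' k : ℕ, a (k + 1) / ((k : ℝ) + 1) ^ m * y ^ (-((k : ℤ) + 1))| ≤ M / y := by
      intro y hy
      have hyC : 1 / C < y := lt_of_lt_of_le hbC hy
      have hy0 : 0 < y := hx0 y hyC
      have hns : Summable (fun k : ℕ => ‖a (k + 1) / ((k : ℝ) + 1) ^ m * y ^ (-((k : ℤ) + 1))‖) :=
        (summable_abs_iff.2 (hsumm m y hyC)).congr fun k => (Real.norm_eq_abs _).symm
      have h1 := norm_tsum_le_tsum_norm hns
      rw [Real.norm_eq_abs] at h1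
      have h1' : |∑' k : ℕ, a (k + 1) / ((k : ℝ) + 1) ^ m * y ^ (-((k : ℤ) + 1))|
          ≤ ∑' k : ℕ, |a (k + 1) / ((k : ℝ) + 1) ^ m * y ^ (-((k : ℤ) + 1))| :=
        h1.trans_eq (tsum_congr fun k => Real.norm_eq_abs _)
      clear h1
      have h1 := h1'
      have h2 : ∑' k : ℕ, |a (k + 1) / ((k : ℝ) + 1) ^ m * y ^ (-((k : ℤ) + 1))|
          ≤ ∑' k : ℕ, |a (k + 1)| / ((k : ℝ) + 1) ^ m * b ^ (-(k : ℤ)) * y⁻¹ := by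
        refine Summable.tsum_le_tsum (fun k => ?_) (summable_abs_iff.2 (hsumm m y hyC))
          (hMsum.mul_right _)
        rw [abs_mul, abs_div, abs_of_pos (zpow_pos hy0 _),
          abs_of_pos (by positivity : (0:ℝ) < ((k:ℝ)+1)^m), mul_assoc]
        refine mul_le_mul_of_nonneg_left ?_ (by positivity)
        have hsplit : y ^ (-((k:ℤ)+1)) = y ^ (-(k:ℤ)) * y⁻¹ := by
          rw [show (-((k:ℤ)+1)) = (-(k:ℤ)) + (-1) by ring, zpow_add₀ hy0.ne', zpow_neg_one]
        rw [hsplit]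
        refine mul_le_mul_of_nonneg_right ?_ (by positivity)
        rw [zpow_neg, zpow_neg, zpow_natCast, zpow_natCast]
        exact inv_anti₀ (by positivity) (pow_le_pow_left₀ hb0.le hy k)
      calc |∑' k : ℕ, a (k + 1) / ((k : ℝ) + 1) ^ m * y ^ (-((k : ℤ) + 1))|
          ≤ ∑' k : ℕ, |a (k + 1)| / ((k : ℝ) + 1) ^ m * b ^ (-(k : ℤ)) * y⁻¹ := h1.trans h2
        _ = M / y := by rw [tsum_mul_right, ← hM, div_eq_mul_inv]
    have hMy : Tendsto (fun y : ℝ => M / y) atTop (nhds 0) :=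
      tendsto_const_nhds.div_atTop tendsto_id
    refine squeeze_zero_norm' ?_ hMy
    filter_upwards [eventually_ge_atTop b] with y hy
    exact key y hy
  -- derivative of the tail series
  have hSderiv : ∀ m : ℕ, ∀ x : ℝ, 1 / C < x →
      HasDerivAt (fun y : ℝ => ∑' k : ℕ, a (k + 1) / ((k : ℝ) + 1) ^ (m + 1) * y ^ (-((k : ℤ) + 1)))
        (-(∑' k : ℕ, a (k + 1) / ((k : ℝ) + 1) ^ m * x ^ (-((k : ℤ) + 1))) / x) x := by
    intro m x hx
    have hxpos : 0 < x := hx0 x hx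
    set b : ℝ := (1 / C + x) / 2 with hbdef
    have hbC : 1 / C < b := by rw [hbdef]; linarith
    have hbx : b < x := by rw [hbdef]; linarith
    have hb0 : 0 < b := hx0 b hbC
    have hu : Summable (fun k : ℕ => |a (k + 1)| * b ^ (-((k : ℤ) + 2))) := by
      have h := (habs b hbC).mul_right b⁻¹
      refine h.congr fun k => ?_
      have : b ^ (-((k:ℤ)+1)) * b⁻¹ = b ^ (-((k:ℤ)+2)) := by
        rw [show (-((k:ℤ)+2)) = (-((k:ℤ)+1)) + (-1) by ring, zpow_add₀ hb0.ne', zpow_neg_one]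
      rw [mul_assoc, this]
    have main := hasDerivAt_tsum_of_isPreconnected hu isOpen_Ioi isPreconnected_Ioi
      (g := fun (k : ℕ) (y : ℝ) => a (k + 1) / ((k : ℝ) + 1) ^ (m + 1) * y ^ (-((k : ℤ) + 1)))
      (g' := fun (k : ℕ) (y : ℝ) => -(a (k + 1) / ((k : ℝ) + 1) ^ m) * y ^ (-((k : ℤ) + 2)))
      (y₀ := x) (y := x)
      (fun k y hy => ?_) (fun k y hy => ?_) (Set.mem_Ioi.2 hbx)
      (hsumm (m+1) x hx) (Set.mem_Ioi.2 hbx)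
    · refine main.congr_deriv (Eq.symm ?_)
      rw [neg_div, div_eq_mul_inv, ← tsum_mul_right, ← tsum_neg]
      refine tsum_congr fun k => ?_
      have : x ^ (-((k:ℤ)+1)) * x⁻¹ = x ^ (-((k:ℤ)+2)) := by
        rw [show (-((k:ℤ)+2)) = (-((k:ℤ)+1)) + (-1) by ring, zpow_add₀ hxpos.ne', zpow_neg_one]
      rw [mul_assoc, this]; ring
    · -- HasDerivAt of each term
      have hy0 : (0:ℝ) < y := lt_trans hb0 (Set.mem_Ioi.1 hy)
      have h := (hasDerivAt_zpow (-((k:ℤ)+1)) y (Or.inl hy0.ne')).const_mul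
        (a (k + 1) / ((k : ℝ) + 1) ^ (m + 1))
      refine h.congr_deriv (Eq.symm ?_)
      have he : (-((k:ℤ)+1)) - 1 = -((k:ℤ)+2) := by ring
      rw [he]
      have hk1 : ((k:ℝ)+1) ≠ 0 := by positivity
      rw [pow_succ]
      push_cast
      field_simp
    · -- bound
      have hy' : b ≤ y := (Set.mem_Ioi.1 hy).le
      have hy0 : (0:ℝ) < y := lt_trans hb0 (Set.mem_Ioi.1 hy)
      rw [Real.norm_eq_abs, abs_mul, abs_neg, abs_div,
        abs_of_pos (by positivity : (0:ℝ) < ((k:ℝ)+1)^m),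
        abs_of_pos (zpow_pos hy0 _)]
      have h1 : |a (k+1)| / ((k:ℝ)+1)^m ≤ |a (k+1)| :=
        div_le_self (abs_nonneg _) (one_le_pow₀ (hone k))
      have h2 : y ^ (-((k:ℤ)+2)) ≤ b ^ (-((k:ℤ)+2)) := by
        have he : ∀ z : ℝ, 0 < z → z ^ (-((k:ℤ)+2)) = (z ^ (k+2))⁻¹ := by
          intro z hz
          rw [show -((k:ℤ)+2) = -((k+2 : ℕ) : ℤ) by push_cast; ring, zpow_neg, zpow_natCast]
        rw [he y hy0, he b hb0]
        exact inv_anti₀ (by positivity) (pow_le_pow_left₀ hb0.le hy' (k+2))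
      exact mul_le_mul h1 h2 (zpow_pos hy0 _).le (abs_nonneg _)
  -- the main induction
  intro m
  induction m with
  | zero =>
    intro x hx
    refine ⟨hsumm 0 x hx, ?_⟩
    rw [hHg0 x hx, hg x hx, (hsum x hx).tsum_eq_zero_add]
    simp only [pow_zero, div_one, Nat.factorial_zero, Nat.cast_one, mul_one, one_mul,
      Nat.cast_zero, neg_zero, zpow_zero]
    congr 1
  | succ m ih =>
    intro x hx
    refine ⟨hsumm (m+1) x hx, ?_⟩
    set G : ℝ → ℝ := fun y => a 0 * (Real.log y) ^ (m+1) / (Nat.factorial (m+1) : ℝ)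
      + (-1 : ℝ) ^ (m+1) * ∑' k : ℕ, a (k + 1) / ((k : ℝ) + 1) ^ (m+1) * y ^ (-((k : ℤ) + 1))
      with hGdef
    have hfac : (Nat.factorial m : ℝ) ≠ 0 := Nat.cast_ne_zero.2 (Nat.factorial_ne_zero m)
    have hGderiv : ∀ y : ℝ, 1 / C < y → HasDerivAt G (Hg m y / y) y := by
      intro y hy
      have hy0 : 0 < y := hx0 y hy
      have hlog : HasDerivAt (fun z : ℝ => a 0 * (Real.log z) ^ (m+1) / (Nat.factorial (m+1) : ℝ))
          (a 0 * ((m+1 : ℕ) * (Real.log y) ^ m * y⁻¹) / (Nat.factorial (m+1) : ℝ)) y := by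
        exact (((Real.hasDerivAt_log hy0.ne').pow (m+1)).const_mul (a 0)).div_const _
      have hS := (hSderiv m y hy).const_mul ((-1 : ℝ) ^ (m+1))
      have := hlog.add hS
      refine this.congr_deriv (Eq.symm ?_)
      rw [(ih y hy).2]
      rw [Nat.factorial_succ]
      push_cast
      field_simp
      ring
    -- D := Hg (m+1) - G is constant on (1/C, ∞) and tends to 0
    have hDderiv : ∀ y : ℝ, 1 / C < y → HasDerivAt (fun z => Hg (m+1) z - G z) 0 y := by
      intro y hy
      have := (hderiv m y hy).sub (hGderiv y hy)
      exact this.congr_deriv (sub_self _)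
    have hconst : ∀ y : ℝ, x ≤ y → Hg (m+1) y - G y = Hg (m+1) x - G x := by
      intro y hxy
      have hcont : ContinuousOn (fun z => Hg (m+1) z - G z) (Set.Icc x y) := by
        intro z hz
        exact ((hDderiv z (lt_of_lt_of_le hx hz.1)).continuousAt).continuousWithinAt
      have hd : ∀ z ∈ Set.Ico x y, HasDerivWithinAt (fun z => Hg (m+1) z - G z) 0 (Set.Ici z) z :=
        fun z hz => (hDderiv z (lt_of_lt_of_le hx hz.1)).hasDerivWithinAt
      exact constant_of_has_deriv_right_zero hcont hd y (Set.right_mem_Icc.2 hxy)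
    have hDtend : Tendsto (fun y => Hg (m+1) y - G y) atTop (nhds 0) := by
      have h1 := hnorm m
      have h2 := (htend (m+1)).const_mul ((-1 : ℝ) ^ (m+1))
      have := h1.sub h2
      simp only [mul_zero, sub_zero] at this
      refine this.congr fun y => ?_
      rw [hGdef]; ring
    have heq : Hg (m+1) x - G x = 0 := by
      have h1 : Tendsto (fun y => Hg (m+1) y - G y) atTop (nhds (Hg (m+1) x - G x)) := by
        refine Tendsto.congr' ?_ tendsto_const_nhds
        filter_upwards [eventually_ge_atTop x] with y hy
        exact (hconst y hy).symm
      exact tendsto_nhds_unique h1 hDtend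
    have := sub_eq_zero.1 heq
    rw [this, hGdef]
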